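/- Let M and N be smooth finite-dimensional manifolds without boundary and r ∈ ℕ ∪ {∞}. Let B : M → Bar be r-differentiable at x ∈ M and V : Bar → N be r-differentiable at B(x). Then (i) the composition V ∘ B : M → N is C^r at x; and (ii) if r ≥ 1, then for every local C^1 lift B̃ : U → ℝ^{2m} × ℝ^n of B around x, the differential of V ∘ B at x equals the composition of the differential of V ∘ Q_{m,n} at B̃(x) with the differential of B̃ at x; in particular this composition is independent of the choice of local lift. -/

import Mathlib

open scoped Manifold
open Classical

/-- The space of barcodes, encoded as pairs consisting of the finite multiset of
bounded off-diagonal intervals `(b,d)` with `b ≠ d`, and the finite multiset of left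
endpoints of the infinite intervals (the diagonal with infinite multiplicity being
implicit). -/
abbrev Barcode : Type := Multiset (ℝ × ℝ) × Multiset ℝ

/-- The space of ordered barcodes with `m` finite bars and `n` infinite ones,
`ℝ^{2m} × ℝ^n`. -/
abbrev OrderedBarcode (m n : ℕ) : Type := (Fin m → ℝ × ℝ) × (Fin n → ℝ)

/-- The quotient map `Q_{m,n} : ℝ^{2m} × ℝ^n → Bar`. -/
noncomputable def Qmap (m n : ℕ) (x : OrderedBarcode m n) : Barcode :=
  (((Finset.univ : Finset (Fin m)).val.map x.1).filter (fun p => p.1 ≠ p.2),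
    (Finset.univ : Finset (Fin n)).val.map x.2)

/-- A barcode valued map `B : M → Bar` is `r`-differentiable at `x` if it admits a
`C^r` local lift through some quotient map `Q_{m,n}` on an open neighborhood of `x`. -/
def RDiffAt {E : Type*} [NormedAddCommGroup E] [NormedSpace ℝ E]
    {H : Type*} [TopologicalSpace H] (I : ModelWithCorners ℝ E H)
    {M : Type*} [TopologicalSpace M] [ChartedSpace H M]
    (r : ℕ∞) (B : M → Barcode) (x : M) : Prop :=
  ∃ (U : Set M) (m n : ℕ) (Bt : M → OrderedBarcode m n),
    IsOpen U ∧ x ∈ U ∧ ContMDiffOn I 𝓘(ℝ, OrderedBarcode m n) r Bt U ∧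
    ∀ y ∈ U, Qmap m n (Bt y) = B y

/-- A map `V : Bar → N` is `r`-differentiable at a barcode `D` if for all `m, n` and
every pre-image `x̄` of `D` under `Q_{m,n}`, the composition `V ∘ Q_{m,n}` is `C^r` on
an open neighborhood of `x̄`. -/
def VRDiffAt {F : Type*} [NormedAddCommGroup F] [NormedSpace ℝ F]
    {G : Type*} [TopologicalSpace G] (J : ModelWithCorners ℝ F G)
    {N : Type*} [TopologicalSpace N] [ChartedSpace G N]
    (r : ℕ∞) (V : Barcode → N) (D : Barcode) : Prop :=
  ∀ (m n : ℕ) (xb : OrderedBarcode m n), Qmap m n xb = D →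
    ∃ W : Set (OrderedBarcode m n), IsOpen W ∧ xb ∈ W ∧
      ContMDiffOn 𝓘(ℝ, OrderedBarcode m n) J r (V ∘ Qmap m n) W

/-- **chain rule.** Let `B : M → Bar` be `r`-differentiable at `x` and
`V : Bar → N` be `r`-differentiable at `B x`.  Then (i) `V ∘ B` is `C^r` at `x` as a
map between smooth manifolds, and (ii) if `r ≥ 1`, for every local `C^1` lift `B̃` of
`B` around `x` the differential of `V ∘ B` at `x` is the composition of the differential
of `V ∘ Q_{m,n}` at `B̃ x` with the differential of `B̃` at `x` — in particular this
composition does not depend on the choice of lift. -/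
theorem chainRule_barcode
    {E : Type*} [NormedAddCommGroup E] [NormedSpace ℝ E] [FiniteDimensional ℝ E]
    {H : Type*} [TopologicalSpace H] (I : ModelWithCorners ℝ E H) [I.Boundaryless]
    {M : Type*} [TopologicalSpace M] [ChartedSpace H M] [IsManifold I (⊤ : ℕ∞) M]
    {F : Type*} [NormedAddCommGroup F] [NormedSpace ℝ F] [FiniteDimensional ℝ F]
    {G : Type*} [TopologicalSpace G] (J : ModelWithCorners ℝ F G) [J.Boundaryless]
    {N : Type*} [TopologicalSpace N] [ChartedSpace G N] [IsManifold J (⊤ : ℕ∞) N]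
    (r : ℕ∞) (B : M → Barcode) (V : Barcode → N) (x : M)
    (hB : RDiffAt I r B x) (hV : VRDiffAt J r V (B x)) :
    ContMDiffAt I J r (V ∘ B) x ∧
    (1 ≤ r →
      ∀ (U : Set M) (m n : ℕ) (Bt : M → OrderedBarcode m n),
        IsOpen U → x ∈ U → ContMDiffOn I 𝓘(ℝ, OrderedBarcode m n) 1 Bt U →
        (∀ y ∈ U, Qmap m n (Bt y) = B y) →
        mfderiv I J (V ∘ B) x =
          (mfderiv 𝓘(ℝ, OrderedBarcode m n) J (V ∘ Qmap m n) (Bt x)).comp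
            (mfderiv I 𝓘(ℝ, OrderedBarcode m n) Bt x)) := by
  constructor
  · obtain ⟨U, m, n, Bt, hUo, hxU, hBt, hEq⟩ := hB
    obtain ⟨W, hWo, hW, hVW⟩ := hV m n (Bt x) (hEq x hxU)
    have hcomp : ContMDiffAt I J r ((V ∘ Qmap m n) ∘ Bt) x :=
      (hVW.contMDiffAt (hWo.mem_nhds hW)).comp x (hBt.contMDiffAt (hUo.mem_nhds hxU))
    refine hcomp.congr_of_eventuallyEq ?_
    filter_upwards [hUo.mem_nhds hxU] with y hy
    simp [Function.comp, hEq y hy]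
  · intro hr U m n Bt hUo hxU hBt hEq
    obtain ⟨W, hWo, hW, hVW⟩ := hV m n (Bt x) (hEq x hxU)
    have hVQ : MDifferentiableAt 𝓘(ℝ, OrderedBarcode m n) J (V ∘ Qmap m n) (Bt x) :=
      (hVW.contMDiffAt (hWo.mem_nhds hW)).mdifferentiableAt (by exact_mod_cast (zero_lt_one.trans_le hr).ne')
    have hBt' : MDifferentiableAt I 𝓘(ℝ, OrderedBarcode m n) Bt x :=
      (hBt.contMDiffAt (hUo.mem_nhds hxU)).mdifferentiableAt one_ne_zero
    have heq : V ∘ B =ᶠ[nhds x] (V ∘ Qmap m n) ∘ Bt := by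
      filter_upwards [hUo.mem_nhds hxU] with y hy
      simp [Function.comp, hEq y hy]
    rw [heq.mfderiv_eq, mfderiv_comp x hVQ hBt']
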